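/- For r = 2 and any n ≥ 1: when a new identical pair {n, n} is added to a multiset set-partition of {1^2, ..., (n-1)^2} with a blocks of multiplicity one and b blocks of multiplicity two (the two copies of n going to distinct blocks or forming new singletons), the total number of resulting multiset set-partitions obtained from this one is 1 + a + b + C(a,2) + a*b + C(b,2) + b, with the understanding that placing an n into one copy of a doubled block splits it into two distinct blocks. -/

import Mathlib

def IsMSP (r n : ℕ) (P : Multiset (Finset ℕ)) : Prop :=
  (∀ B ∈ P, B ≠ ∅) ∧
    P.bind Finset.val = (Finset.Icc 1 n).val.bind fun i => Multiset.replicate r i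

/-- Removing the element `n` from every block (and discarding blocks that become empty)
recovers the multiset set-partition of `{1^2, …, (n-1)^2}` from which a given
multiset set-partition of `{1^2, …, n^2}` arose. -/
def restrict (n : ℕ) (Q : Multiset (Finset ℕ)) : Multiset (Finset ℕ) :=
  (Q.map fun B => B.erase n).filter fun B => B ≠ ∅

lemma count_bind_eq_card_filter (x : ℕ) (Q : Multiset (Finset ℕ)) :
    Multiset.count x (Q.bind Finset.val) = Multiset.card (Q.filter (fun B => x ∈ B)) := by
  induction Q using Multiset.induction_on with
  | empty => simp
  | cons B Q ih =>
    rw [Multiset.cons_bind, Multiset.count_add, ih, Multiset.filter_cons]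
    by_cases h : x ∈ B
    · simp [h, Multiset.count_eq_one_of_mem B.nodup h, Nat.add_comm]
    · have : Multiset.count x B.val = 0 := Multiset.count_eq_zero.2 h
      simp [h, this]

lemma count_bind_rep (r x : ℕ) (s : Multiset ℕ) :
    Multiset.count x (s.bind fun i => Multiset.replicate r i) = r * s.count x := by
  induction s using Multiset.induction_on with
  | empty => simp
  | cons i s ih =>
    rw [Multiset.cons_bind, Multiset.count_add, ih, Multiset.count_cons,
      Multiset.count_replicate]
    by_cases h : x = i
    · subst h; simp [Nat.mul_add, Nat.add_comm]
    · simp [h, Ne.symm h, fun hx : i = x => h hx.symm]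

lemma bind_insert (n : ℕ) (K : Multiset (Finset ℕ)) (h : ∀ S ∈ K, n ∉ S) :
    (K.map (insert n)).bind Finset.val
      = Multiset.replicate (Multiset.card K) n + K.bind Finset.val := by
  induction K using Multiset.induction_on with
  | empty => simp
  | cons S K ih =>
    have hS : n ∉ S := h S (Multiset.mem_cons_self _ _)
    have hins : (insert n S).val = n ::ₘ S.val := by
      rw [Finset.insert_val, Multiset.ndinsert_of_notMem hS]
    rw [Multiset.map_cons, Multiset.cons_bind, Multiset.cons_bind, hins,
      ih (fun T hT => h T (Multiset.mem_cons_of_mem hT)), Multiset.card_cons,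
      Multiset.replicate_succ]
    simp only [Multiset.cons_add]
    congr 1
    rw [add_left_comm]

lemma bind_empty_blocks (K : Multiset (Finset ℕ)) (h : ∀ S ∈ K, S = ∅) :
    K.bind Finset.val = 0 := by
  induction K using Multiset.induction_on with
  | empty => simp
  | cons S K ih =>
    rw [Multiset.cons_bind, ih (fun T hT => h T (Multiset.mem_cons_of_mem hT)),
      h S (Multiset.mem_cons_self _ _)]
    simp

/-- the insertion map -/
def ins (n : ℕ) (P K : Multiset (Finset ℕ)) : Multiset (Finset ℕ) :=
  K.map (insert n) + (P - K.filter (fun B => B ≠ ∅))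

section main

variable (n : ℕ) (hn : 1 ≤ n) (P : Multiset (Finset ℕ))
  (hPne : ∀ B ∈ P, B ≠ ∅)
  (hPbind : P.bind Finset.val
    = (Finset.Icc 1 (n-1)).val.bind fun i => Multiset.replicate 2 i)

include hn hPbind in
lemma hPn : ∀ B ∈ P, n ∉ B := by
  intro B hB hnB
  have h1 := count_bind_eq_card_filter n P
  rw [hPbind, count_bind_rep] at h1
  have h2 : (Finset.Icc 1 (n-1)).val.count n = 0 := by
    rw [Multiset.count_eq_zero]
    intro h
    have := Finset.mem_Icc.1 (Finset.mem_def.2 h)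
    omega
  rw [h2] at h1
  have h3 : B ∈ P.filter (fun B => n ∈ B) := Multiset.mem_filter.2 ⟨hB, hnB⟩
  have h4 : Multiset.card (P.filter (fun B => n ∈ B)) ≠ 0 := by
    intro h
    rw [Multiset.card_eq_zero] at h
    rw [h] at h3
    exact absurd h3 (Multiset.notMem_zero B)
  omega

include hPne hPbind in
lemma hP2 : ∀ B ∈ P, P.count B ≤ 2 := by
  intro B hB
  obtain ⟨x, hx⟩ := Finset.nonempty_iff_ne_empty.2 (hPne B hB)
  have hrep : Multiset.replicate (P.count B) B ≤ P :=
    Multiset.le_count_iff_replicate_le.1 le_rfl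
  have h0 : P.count B ≤ Multiset.card (P.filter fun C => x ∈ C) := by
    have h1 := Multiset.count_le_card B (P.filter fun C => x ∈ C)
    rw [Multiset.count_filter, if_pos hx] at h1
    exact h1
  rw [← count_bind_eq_card_filter, hPbind, count_bind_rep] at h0
  have h2 : (Finset.Icc 1 (n-1)).val.count x ≤ 1 :=
    Multiset.nodup_iff_count_le_one.1 (Finset.Icc 1 (n-1)).nodup x
  omega


include hn hPne hPbind in
lemma ins_valid (K : Multiset (Finset ℕ)) (hKM : K ≤ ∅ ::ₘ ∅ ::ₘ P)
    (hK2 : Multiset.card K = 2) :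
    IsMSP 2 n (ins n P K) ∧ restrict n (ins n P K) = P := by
  have hMn : ∀ S ∈ (∅ ::ₘ ∅ ::ₘ P : Multiset (Finset ℕ)), n ∉ S := by
    intro S hS
    rcases Multiset.mem_cons.1 hS with rfl | hS
    · simp
    rcases Multiset.mem_cons.1 hS with rfl | hS
    · simp
    exact hPn n hn P hPbind S hS
  have hKn : ∀ S ∈ K, n ∉ S := fun S hS => hMn S (Multiset.mem_of_le hKM hS)
  have hfilterM : (Multiset.filter (fun B => B ≠ ∅) (∅ ::ₘ ∅ ::ₘ P)) = P := by
    rw [Multiset.filter_cons_of_neg _ (by simp), Multiset.filter_cons_of_neg _ (by simp)]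
    exact Multiset.filter_eq_self.2 hPne
  set K₁ := K.filter (fun B => B ≠ ∅) with hK₁
  have hK₁P : K₁ ≤ P := by
    rw [hK₁, ← hfilterM]
    exact Multiset.filter_le_filter _ hKM
  have hIcc : (Finset.Icc 1 n).val = n ::ₘ (Finset.Icc 1 (n-1)).val := by
    have h1 : Finset.Icc 1 n = insert n (Finset.Icc 1 (n-1)) := by
      ext x
      simp only [Finset.mem_Icc, Finset.mem_insert]
      omega
    have h2 : n ∉ Finset.Icc 1 (n-1) := by
      intro h
      have := Finset.mem_Icc.1 h
      omega
    rw [h1, Finset.insert_val, Multiset.ndinsert_of_notMem h2]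
  have hKbind : K.bind Finset.val = K₁.bind Finset.val := by
    conv_lhs => rw [← Multiset.filter_add_not (fun B => B ≠ ∅) K]
    rw [Multiset.add_bind, bind_empty_blocks (K.filter (fun B => ¬ B ≠ ∅))
      (fun S hS => not_not.1 (Multiset.of_mem_filter (p := fun B => ¬ B ≠ ∅) hS)), add_zero]
  have hbind : (ins n P K).bind Finset.val
      = (Finset.Icc 1 n).val.bind fun i => Multiset.replicate 2 i := by
    rw [ins, Multiset.add_bind, bind_insert n K hKn, hK2, hKbind, hIcc,
      Multiset.cons_bind, ← hPbind]
    conv_rhs => rw [← tsub_add_cancel_of_le hK₁P]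
    rw [Multiset.add_bind, add_assoc, add_comm (K₁.bind Finset.val)]
  refine ⟨⟨?_, hbind⟩, ?_⟩
  · intro B hB
    rcases Multiset.mem_add.1 hB with hB | hB
    · obtain ⟨S, _, rfl⟩ := Multiset.mem_map.1 hB
      exact Finset.insert_ne_empty _ _
    · exact hPne B (Multiset.mem_of_le (tsub_le_self) hB)
  · rw [restrict, ins, Multiset.map_add, Multiset.map_map]
    have e1 : K.map (fun B => (insert n B).erase n) = K := by
      rw [Multiset.map_congr rfl (fun S hS => Finset.erase_insert (hKn S hS))]
      exact Multiset.map_id' K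
    have e2 : (P - K₁).map (fun B => B.erase n) = P - K₁ := by
      rw [Multiset.map_congr rfl
        (fun S hS => Finset.erase_eq_of_notMem
          (hPn n hn P hPbind S (Multiset.mem_of_le tsub_le_self hS)))]
      exact Multiset.map_id' _
    rw [show (fun B => (Finset.erase B n)) ∘ insert n = fun B => (insert n B).erase n from rfl]
    rw [e1, e2, Multiset.filter_add, ← hK₁]
    rw [Multiset.filter_eq_self.2
      (fun B hB => hPne B (Multiset.mem_of_le tsub_le_self hB))]
    rw [add_comm, tsub_add_cancel_of_le hK₁P]

include hn hPne hPbind in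
lemma valid_ins (Q : Multiset (Finset ℕ)) (hQ : IsMSP 2 n Q) (hres : restrict n Q = P) :
    ∃ K, K ≤ ∅ ::ₘ ∅ ::ₘ P ∧ Multiset.card K = 2 ∧ ins n P K = Q := by
  obtain ⟨hQne, hQbind⟩ := hQ
  set Kb := Q.filter (fun B => n ∈ B) with hKbdef
  set K := Kb.map (fun B => B.erase n) with hKdef
  set Q₀ := Q.filter (fun B => ¬ n ∈ B) with hQ₀def
  have hQsplit : Kb + Q₀ = Q := Multiset.filter_add_not _ Q
  have hKb2 : Multiset.card Kb = 2 := by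
    rw [hKbdef]
    have h1 := count_bind_eq_card_filter n Q
    rw [hQbind, count_bind_rep] at h1
    have h2 : (Finset.Icc 1 n).val.count n = 1 :=
      Multiset.count_eq_one_of_mem (Finset.Icc 1 n).nodup
        (Finset.mem_Icc.2 ⟨hn, le_rfl⟩)
    rw [h2] at h1
    omega
  have hKbn : ∀ B ∈ Kb, n ∈ B := fun B hB =>
    Multiset.of_mem_filter (p := fun B => n ∈ B) (hKbdef ▸ hB)
  have hQ₀n : ∀ B ∈ Q₀, n ∉ B := fun B hB =>
    Multiset.of_mem_filter (p := fun B => ¬ n ∈ B) (hQ₀def ▸ hB)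
  have hmapKb : K.map (insert n) = Kb := by
    rw [hKdef, Multiset.map_map]
    exact (Multiset.map_congr rfl (fun B hB => Finset.insert_erase (hKbn B hB))).trans
      (Multiset.map_id' _)
  set K₁ := K.filter (fun B => B ≠ ∅) with hK₁
  have hres' : P = K₁ + Q₀ := by
    rw [← hres, restrict]
    conv_lhs => rw [← hQsplit]
    rw [Multiset.map_add, Multiset.filter_add, ← hKdef, ← hK₁]
    congr 1
    rw [Multiset.map_congr rfl (fun B hB => Finset.erase_eq_of_notMem (hQ₀n B hB)),
      Multiset.map_id' _]
    exact Multiset.filter_eq_self.2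
      (fun B hB => hQne B (Multiset.mem_of_le (Multiset.filter_le _ Q) hB))
  have hK₁P : K₁ ≤ P := hres' ▸ le_add_right le_rfl
  have hsub : P - K₁ = Q₀ := by rw [hres', add_tsub_cancel_left]
  have hK2 : Multiset.card K = 2 := by rw [hKdef, Multiset.card_map, hKb2]
  refine ⟨K, ?_, hK2, ?_⟩
  · rw [Multiset.le_iff_count]
    intro S
    by_cases hS : S = ∅
    · subst hS
      have h1 : Multiset.count ∅ K ≤ 2 := hK2 ▸ Multiset.count_le_card _ _
      have h2 : (2:ℕ) ≤ Multiset.count ∅ (∅ ::ₘ ∅ ::ₘ P) := by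
        rw [Multiset.count_cons_self, Multiset.count_cons_self]
        omega
      omega
    · have h1 : Multiset.count S K = Multiset.count S K₁ := by
        rw [hK₁, Multiset.count_filter, if_pos hS]
      have h2 : Multiset.count S K₁ ≤ Multiset.count S P :=
        Multiset.count_le_of_le _ hK₁P
      have h3 : Multiset.count S (∅ ::ₘ ∅ ::ₘ P) = Multiset.count S P := by
        rw [Multiset.count_cons_of_ne hS, Multiset.count_cons_of_ne hS]
      omega
  · rw [ins, hmapKb, ← hK₁, hsub, hQsplit]

end main

theorem arith (a b : ℕ) : Nat.choose (1 + (a+b)) 2 + (1 + b)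
    = 1 + a + b + Nat.choose a 2 + a * b + Nat.choose b 2 + b := by
  induction a with
  | zero => simp [Nat.add_comm 1 b, Nat.choose_succ_succ, Nat.choose_one_right]; omega
  | succ a ih =>
    have h1 : 1 + (a + 1 + b) = (1 + (a+b)) + 1 := by omega
    have h2 : (a+1) * b = a * b + b := by ring
    rw [h1, Nat.choose_succ_succ (1+(a+b)) 1, Nat.choose_succ_succ a 1, h2] at *
    simp [Nat.choose_one_right] at *
    omega

theorem case_count_r2 (n : ℕ) (hn : 1 ≤ n) (P : Multiset (Finset ℕ))
    (hP : IsMSP 2 (n - 1) P)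
    (a b : ℕ)
    (ha : a = (P.toFinset.filter fun B => P.count B = 1).card)
    (hb : b = (P.toFinset.filter fun B => P.count B = 2).card) :
    {Q : Multiset (Finset ℕ) | IsMSP 2 n Q ∧ restrict n Q = P}.ncard =
      1 + a + b + Nat.choose a 2 + a * b + Nat.choose b 2 + b := by
  obtain ⟨hPne, hPbind⟩ := hP
  have hcP2 := hP2 n P hPne hPbind
  have hMn : ∀ S ∈ (∅ ::ₘ ∅ ::ₘ P : Multiset (Finset ℕ)), n ∉ S := by
    intro S hS
    rcases Multiset.mem_cons.1 hS with rfl | hS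
    · simp
    rcases Multiset.mem_cons.1 hS with rfl | hS
    · simp
    exact hPn n hn P hPbind S hS
  set D : Finset (Finset ℕ) := insert ∅ P.toFinset with hD
  have hDM : D = (∅ ::ₘ ∅ ::ₘ P : Multiset (Finset ℕ)).toFinset := by
    rw [hD, Multiset.toFinset_cons, Multiset.toFinset_cons, Finset.insert_idem]
  set F : Finset (Multiset (Finset ℕ)) :=
    (D.powersetCard 2).image Finset.val ∪
      (D.filter fun x => 2 ≤ Multiset.count x (∅ ::ₘ ∅ ::ₘ P)).image
        (fun x => ({x, x} : Multiset (Finset ℕ))) with hF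
  have hFmem : ∀ K, K ∈ F ↔ K ≤ (∅ ::ₘ ∅ ::ₘ P : Multiset (Finset ℕ)) ∧
      Multiset.card K = 2 := by
    intro K
    constructor
    · intro hK
      rcases Finset.mem_union.1 hK with hK | hK
      · obtain ⟨T, hT, rfl⟩ := Finset.mem_image.1 hK
        obtain ⟨hTD, hTcard⟩ := Finset.mem_powersetCard.1 hT
        refine ⟨?_, hTcard⟩
        calc T.val ≤ D.val := Finset.val_le_iff.2 hTD
          _ ≤ _ := by
              rw [hDM, Multiset.toFinset_val]
              exact Multiset.dedup_le _
      · obtain ⟨x, hx, rfl⟩ := Finset.mem_image.1 hK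
        obtain ⟨hxD, hxc⟩ := Finset.mem_filter.1 hx
        refine ⟨?_, by simp⟩
        rw [Multiset.le_iff_count]
        intro y
        by_cases hy : y = x
        · subst hy; simpa using hxc
        · have h0 : Multiset.count y ({x,x} : Multiset (Finset ℕ)) = 0 := by
            rw [Multiset.count_eq_zero]; simp [hy]
          rw [h0]; exact Nat.zero_le _
    · rintro ⟨hKM, hK2⟩
      obtain ⟨x, y, rfl⟩ := Multiset.card_eq_two.1 hK2
      have hx : x ∈ (∅ ::ₘ ∅ ::ₘ P : Multiset (Finset ℕ)) :=
        Multiset.mem_of_le hKM (by simp)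
      have hy : y ∈ (∅ ::ₘ ∅ ::ₘ P : Multiset (Finset ℕ)) :=
        Multiset.mem_of_le hKM (by simp)
      have hxD : x ∈ D := by rw [hDM]; exact Multiset.mem_toFinset.2 hx
      have hyD : y ∈ D := by rw [hDM]; exact Multiset.mem_toFinset.2 hy
      by_cases hxy : x = y
      · subst hxy
        apply Finset.mem_union_right
        refine Finset.mem_image.2 ⟨x, Finset.mem_filter.2 ⟨hxD, ?_⟩, rfl⟩
        have h1 := Multiset.count_le_of_le x hKM
        simpa using h1
      · apply Finset.mem_union_left
        refine Finset.mem_image.2 ⟨{x, y},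
          Finset.mem_powersetCard.2 ⟨?_, Finset.card_pair hxy⟩, ?_⟩
        · intro z hz
          rcases Finset.mem_insert.1 hz with rfl | hz
          · exact hxD
          · rw [Finset.mem_singleton.1 hz]; exact hyD
        · rw [Finset.insert_val, Multiset.ndinsert_of_notMem (by simp [hxy]),
            Finset.singleton_val]
          exact (Multiset.insert_eq_cons x {y}).symm
  have recov : ∀ L ≤ (∅ ::ₘ ∅ ::ₘ P : Multiset (Finset ℕ)),
      ((ins n P L).filter (fun B => n ∈ B)).map (fun B => B.erase n) = L := by
    intro L hLM
    have hLn : ∀ S ∈ L, n ∉ S := fun S hS => hMn S (Multiset.mem_of_le hLM hS)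
    rw [ins, Multiset.filter_add]
    rw [Multiset.filter_eq_self.2 (fun B hB => by
      obtain ⟨S, _, rfl⟩ := Multiset.mem_map.1 hB
      exact Finset.mem_insert_self n S)]
    rw [Multiset.filter_eq_nil.2 (fun B hB =>
      hPn n hn P hPbind B (Multiset.mem_of_le tsub_le_self hB))]
    rw [add_zero, Multiset.map_map]
    exact (Multiset.map_congr rfl (fun S hS => Finset.erase_insert (hLn S hS))).trans
      (Multiset.map_id' _)
  have hinj : Set.InjOn (ins n P) F := by
    intro K hK K' hK' h
    obtain ⟨hKM, _⟩ := (hFmem K).1 (Finset.mem_coe.1 hK)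
    obtain ⟨hK'M, _⟩ := (hFmem K').1 (Finset.mem_coe.1 hK')
    rw [← recov K hKM, ← recov K' hK'M, h]
  have hseteq : {Q : Multiset (Finset ℕ) | IsMSP 2 n Q ∧ restrict n Q = P}
      = ↑(F.image (ins n P)) := by
    ext Q
    simp only [Set.mem_setOf_eq, Finset.coe_image, Set.mem_image, Finset.mem_coe]
    constructor
    · rintro ⟨h1, h2⟩
      obtain ⟨K, hKM, hK2, hKQ⟩ := valid_ins n hn P hPne hPbind Q h1 h2
      exact ⟨K, (hFmem K).2 ⟨hKM, hK2⟩, hKQ⟩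
    · rintro ⟨K, hK, rfl⟩
      obtain ⟨hKM, hK2⟩ := (hFmem K).1 hK
      exact ins_valid n hn P hPne hPbind K hKM hK2
  rw [hseteq, Set.ncard_coe_finset, Finset.card_image_of_injOn hinj]
  -- counting
  have hEmpP : ∅ ∉ P := fun h => hPne ∅ h rfl
  have htF : P.toFinset.card = a + b := by
    have h1 := Finset.card_filter_add_card_filter_not
      (s := P.toFinset) (p := fun B => P.count B = 1)
    have h2 : P.toFinset.filter (fun B => ¬ P.count B = 1)
        = P.toFinset.filter (fun B => P.count B = 2) := by
      apply Finset.filter_congr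
      intro B hB
      have hmem := Multiset.mem_toFinset.1 hB
      have hge : 1 ≤ P.count B := Multiset.one_le_count_iff_mem.2 hmem
      have hle := hcP2 B hmem
      constructor <;> intro h <;> omega
    rw [h2] at h1
    rw [ha, hb]
    omega
  have hDcard : D.card = 1 + (a + b) := by
    rw [hD, Finset.card_insert_of_notMem (by simp [Multiset.mem_toFinset, hEmpP]), htF]
    omega
  have hfilt : D.filter (fun x => 2 ≤ Multiset.count x (∅ ::ₘ ∅ ::ₘ P))
      = insert ∅ (P.toFinset.filter fun B => P.count B = 2) := by
    ext S
    simp only [hD, Finset.mem_filter, Finset.mem_insert, Multiset.mem_toFinset]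
    constructor
    · rintro ⟨h1 | h1, h2⟩
      · exact Or.inl h1
      · right
        refine ⟨h1, ?_⟩
        have hSne : S ≠ ∅ := hPne S h1
        rw [Multiset.count_cons_of_ne hSne, Multiset.count_cons_of_ne hSne] at h2
        have := hcP2 S h1
        omega
    · rintro (rfl | ⟨h1, h2⟩)
      · refine ⟨Or.inl rfl, ?_⟩
        rw [Multiset.count_cons_self, Multiset.count_cons_self]
        omega
      · refine ⟨Or.inr h1, ?_⟩
        have hSne : S ≠ ∅ := hPne S h1
        rw [Multiset.count_cons_of_ne hSne, Multiset.count_cons_of_ne hSne]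
        omega
  have hfiltcard : (D.filter (fun x => 2 ≤ Multiset.count x (∅ ::ₘ ∅ ::ₘ P))).card
      = 1 + b := by
    rw [hfilt, Finset.card_insert_of_notMem (by simp [Multiset.mem_toFinset, hEmpP]), ← hb]
    omega
  have hdisj : Disjoint ((D.powersetCard 2).image Finset.val)
      ((D.filter fun x => 2 ≤ Multiset.count x (∅ ::ₘ ∅ ::ₘ P)).image
        (fun x => ({x, x} : Multiset (Finset ℕ)))) := by
    rw [Finset.disjoint_left]
    rintro K hK1 hK2
    obtain ⟨T, _, rfl⟩ := Finset.mem_image.1 hK1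
    obtain ⟨x, _, hTx⟩ := Finset.mem_image.1 hK2
    have hnd : T.val.Nodup := T.nodup
    rw [← hTx] at hnd
    simp at hnd
  have pairinj : Function.Injective (fun x : Finset ℕ => ({x,x} : Multiset (Finset ℕ))) := by
    intro x y h
    have h' : ({x,x} : Multiset (Finset ℕ)) = {y,y} := h
    have : x ∈ ({y,y} : Multiset (Finset ℕ)) := by
      rw [← h']; simp
    simpa using this
  rw [hF, Finset.card_union_of_disjoint hdisj,
    Finset.card_image_of_injective _ Finset.val_injective, Finset.card_powersetCard,
    Finset.card_image_of_injective _ pairinj, hfiltcard, hDcard]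
  exact arith a b
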